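/- Let a > 0, b > 0, c > 0. The function N(p) = a·(1 + c·p)·ln(1 + c·p) − c·(a·p + b) satisfies N(p) → −b·c < 0 as p → 0⁺ and N(p) → +∞ as p → +∞; consequently there exists a unique p* > 0 with N(p*) = 0, and moreover N(p) < 0 for all 0 < p < p* and N(p) > 0 for all p > p*. -/

import Mathlib

open Real Filter Set

private lemma nfun_hasDerivAt (a b c : ℝ) (x : ℝ) (hx : 0 < 1 + c * x) :
    HasDerivAt (fun p : ℝ => a * (1 + c * p) * Real.log (1 + c * p) - c * (a * p + b))
      (a * c * Real.log (1 + c * x)) x := by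
  have h1 : HasDerivAt (fun p : ℝ => 1 + c * p) c x := by
    simpa using ((hasDerivAt_id x).const_mul c).const_add (1:ℝ)
  have hlog : HasDerivAt (fun p : ℝ => Real.log (1 + c * p)) ((1 + c * x)⁻¹ * c) x :=
    by have := (Real.hasDerivAt_log hx.ne').comp x h1; exact this
  have h2 : HasDerivAt (fun p : ℝ => a * (1 + c * p)) (a * c) x := h1.const_mul a
  have h3 : HasDerivAt (fun p : ℝ => a * (1 + c * p) * Real.log (1 + c * p))
      ((a * c) * Real.log (1 + c * x) + (a * (1 + c * x)) * ((1 + c * x)⁻¹ * c)) x :=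
    h2.mul hlog
  have h4 : HasDerivAt (fun p : ℝ => c * (a * p + b)) (c * a) x := by
    simpa using (((hasDerivAt_id x).const_mul a).add (hasDerivAt_const x b)).const_mul c
  have := h3.sub h4
  refine this.congr_deriv ?_
  rw [mul_assoc a (1 + c * x), ← mul_assoc (1 + c * x) (1 + c * x)⁻¹ c, mul_inv_cancel₀ hx.ne', one_mul]
  ring

/-- `N(p) = a·(1 + c·p)·ln(1 + c·p) − c·(a·p + b)` tends to `−b·c < 0`
as `p → 0⁺`, tends to `+∞` as `p → +∞`, and has a unique positive root `p*`, with
`N < 0` on `(0, p*)` and `N > 0` on `(p*, ∞)`. -/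
theorem stmt_2 (a b c : ℝ) (ha : 0 < a) (hb : 0 < b) (hc : 0 < c) :
    Tendsto (fun p : ℝ => a * (1 + c * p) * Real.log (1 + c * p) - c * (a * p + b))
        (nhdsWithin 0 (Set.Ioi 0)) (nhds (-(b * c))) ∧
    -(b * c) < 0 ∧
    Tendsto (fun p : ℝ => a * (1 + c * p) * Real.log (1 + c * p) - c * (a * p + b))
        atTop atTop ∧
    ∃ pstar : ℝ, 0 < pstar ∧
      a * (1 + c * pstar) * Real.log (1 + c * pstar) - c * (a * pstar + b) = 0 ∧
      (∀ q : ℝ, 0 < q →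
          a * (1 + c * q) * Real.log (1 + c * q) - c * (a * q + b) = 0 → q = pstar) ∧
      (∀ p : ℝ, 0 < p → p < pstar →
          a * (1 + c * p) * Real.log (1 + c * p) - c * (a * p + b) < 0) ∧
      (∀ p : ℝ, pstar < p →
          0 < a * (1 + c * p) * Real.log (1 + c * p) - c * (a * p + b)) := by
  set f : ℝ → ℝ := fun p => a * (1 + c * p) * Real.log (1 + c * p) - c * (a * p + b) with hf
  have hf0 : f 0 = -(b * c) := by simp [hf]; ring
  -- limit at 0⁺
  have hcont0 : Tendsto f (nhdsWithin 0 (Set.Ioi 0)) (nhds (-(b * c))) := by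
    have : ContinuousAt f 0 := (nfun_hasDerivAt a b c 0 (by norm_num)).continuousAt
    simpa [hf0] using this.continuousWithinAt.tendsto
  -- limit at ∞
  have htop : Tendsto f atTop atTop := by
    have hbd : ∀ᶠ p in atTop, a * c * p - c * b ≤ f p := by
      filter_upwards [eventually_ge_atTop ((Real.exp 2 - 1) / c)] with p hp
      have h1 : Real.exp 2 ≤ 1 + c * p := by
        have := (div_le_iff₀ hc).mp hp
        linarith [mul_comm p c]
      have h2 : (2:ℝ) ≤ Real.log (1 + c * p) := by
        rw [show (2:ℝ) = Real.log (Real.exp 2) by rw [Real.log_exp]]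
        exact Real.log_le_log (Real.exp_pos 2) h1
      have h3 : (0:ℝ) < 1 + c * p := lt_of_lt_of_le (Real.exp_pos 2) h1
      have h4 : 2 * (a * (1 + c * p)) ≤ a * (1 + c * p) * Real.log (1 + c * p) := by
        nlinarith [mul_pos ha h3]
      simp only [hf]
      have he : (3:ℝ) ≤ Real.exp 2 := by linarith [Real.add_one_le_exp (2:ℝ)]
      nlinarith [mul_pos ha h3]
    have hlin : Tendsto (fun p : ℝ => a * c * p - c * b) atTop atTop := by
      apply Tendsto.atTop_add _ tendsto_const_nhds
      exact (tendsto_id.const_mul_atTop (mul_pos ha hc))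
    exact tendsto_atTop_mono' _ hbd (by simpa [sub_eq_add_neg] using hlin)
  -- strict mono on Ici 0
  have hderiv : ∀ x ∈ Set.Ici (0:ℝ), HasDerivAt f (a * c * Real.log (1 + c * x)) x := by
    intro x hx
    exact nfun_hasDerivAt a b c x (by have := hx; simp only [Set.mem_Ici] at this; nlinarith)
  have hcontOn : ContinuousOn f (Set.Ici 0) := fun x hx =>
    ((hderiv x hx).continuousAt).continuousWithinAt
  have hmono : StrictMonoOn f (Set.Ici 0) := by
    apply strictMonoOn_of_deriv_pos (convex_Ici 0) hcontOn
    intro x hx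
    rw [interior_Ici] at hx
    rw [(hderiv x (Set.mem_Ici.mpr (le_of_lt hx))).deriv]
    have h1 : (1:ℝ) < 1 + c * x := by nlinarith [Set.mem_Ioi.mp hx]
    have := Real.log_pos h1
    positivity
  -- find M with f M > 0
  obtain ⟨M, hM⟩ := (htop.eventually (eventually_gt_atTop 0)).and (eventually_gt_atTop 0) |>.exists
  obtain ⟨hfM, hM0⟩ := hM
  have h0M : (0:ℝ) ≤ M := le_of_lt hM0
  have hneg0 : f 0 < 0 := by rw [hf0]; nlinarith
  obtain ⟨pstar, hpmem, hproot⟩ := intermediate_value_Icc h0M (hcontOn.mono (Set.Icc_subset_Ici_self))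
    (Set.mem_Icc.mpr ⟨le_of_lt hneg0, le_of_lt hfM⟩)
  have hps0 : 0 < pstar := by
    rcases lt_or_eq_of_le hpmem.1 with h | h
    · exact h
    · exfalso; rw [← h] at hproot; rw [hproot] at hneg0; exact lt_irrefl 0 hneg0
  refine ⟨hcont0, by nlinarith, htop, pstar, hps0, hproot, ?_, ?_, ?_⟩
  · intro q hq hfq
    by_contra hne
    rcases lt_or_gt_of_ne hne with h | h
    · have h2 := hmono (le_of_lt hq) (le_of_lt hps0) h
      have hfq' : f q = 0 := hfq
      rw [hfq', hproot] at h2; exact lt_irrefl 0 h2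
    · have h2 := hmono (le_of_lt hps0) (le_of_lt (lt_trans hps0 h)) h
      have hfq' : f q = 0 := hfq
      rw [hfq', hproot] at h2; exact lt_irrefl 0 h2
  · intro p hp hpps
    have := hmono (le_of_lt hp) (le_of_lt hps0) hpps
    rw [hproot] at this; exact this
  · intro p hpp
    have := hmono (le_of_lt hps0) (le_of_lt (lt_trans hps0 hpp)) hpp
    rw [hproot] at this; exact this
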